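/- For every n ∈ ℕ, h_n' ≤ h_n'' ≤ 2·h_n'. -/

import Mathlib

/-- The weight of a set system: the sum of edge sizes, counted with multiplicity. -/
def sysWeight (H : Multiset (Finset ℕ)) : ℕ := (H.map Finset.card).sum

/-- A set system is normalized if all its edges are nonempty and its vertex set
(the union of its edges) equals `{1, …, m}` for some `m`. -/
def IsNormalized (H : Multiset (Finset ℕ)) : Prop :=
  (∀ E ∈ H, E.Nonempty) ∧ ∃ m : ℕ, H.sup = Finset.Icc 1 m

namespace Klazar

/-- maximum element of a finite set of naturals (0 for ∅). -/
def fmax (s : Finset ℕ) : ℕ := s.sup id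

lemma fmax_le {s : Finset ℕ} {k : ℕ} (h : ∀ x ∈ s, x ≤ k) : fmax s ≤ k := Finset.sup_le h

lemma le_fmax {s : Finset ℕ} {x : ℕ} (h : x ∈ s) : x ≤ fmax s := Finset.le_sup (f := id) h

lemma fmax_Icc (m : ℕ) : fmax (Finset.Icc 1 m) = m := by
  rcases Nat.eq_zero_or_pos m with h|h
  · subst h; simp [fmax]
  · exact le_antisymm (fmax_le fun x hx => (Finset.mem_Icc.mp hx).2)
      (le_fmax (Finset.mem_Icc.mpr ⟨h, le_rfl⟩))

lemma Icc_union_Ioc {m M : ℕ} (h : m ≤ M) :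
    Finset.Icc 1 m ∪ Finset.Ioc m M = Finset.Icc 1 M := by
  ext x; simp only [Finset.mem_union, Finset.mem_Icc, Finset.mem_Ioc]; omega

/-- the union of the edges of `G` containing `v`. -/
def pick (G : Multiset (Finset ℕ)) (v : ℕ) : Finset ℕ :=
  (G.filter (fun E => v ∈ E)).sup

lemma pick_eq {G : Multiset (Finset ℕ)} {D : Finset ℕ} {v : ℕ} (hD : D ∈ G) (hv : v ∈ D)
    (hother : ∀ B ∈ G.erase D, v ∉ B) : pick G v = D := by
  have hfil : G.filter (fun E => v ∈ E) = {D} := by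
    have hG : G = D ::ₘ G.erase D := (Multiset.cons_erase hD).symm
    conv_lhs => rw [hG]
    rw [Multiset.filter_cons, if_pos hv, Multiset.filter_eq_nil.mpr hother]
    simp
  rw [pick, hfil, Multiset.sup_singleton]

/-- H-mode read: every fresh-meeting piece stands for a pair of its old part. -/
def readPairs (G' : Multiset (Finset ℕ)) (D : Finset ℕ) (m : ℕ) : Multiset (Finset ℕ) :=
  (G'.filter (fun B => fmax B ≤ m)) +
  (Multiset.replicate 2 (D.filter (fun x => x ≤ m)) +
  (G'.filter (fun B => ¬ fmax B ≤ m)).bind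
    (fun B => Multiset.replicate 2 (B.filter (fun x => x ≤ m))))

/-- stairs read: pieces stand for `2⌊card/2⌋` copies of their (singleton) old part. -/
def readStairs (G' : Multiset (Finset ℕ)) (D : Finset ℕ) (m : ℕ) : Multiset (Finset ℕ) :=
  (G'.filter (fun B => fmax B ≤ m)) +
  (Multiset.replicate (D.card + 1) (D.filter (fun x => x ≤ m)) +
  (G'.filter (fun B => ¬ fmax B ≤ m)).bind
    (fun B => Multiset.replicate (2*(B.card/2)) (B.filter (fun x => x ≤ m))))

/-- the anchor vertex `h`: largest element of `D` not exceeding the top of the rest. -/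
def hOf (G' : Multiset (Finset ℕ)) (D : Finset ℕ) : ℕ :=
  fmax (D.filter (fun x => x ≤ fmax G'.sup))

/-- decoding in the absence of the `{M}` marker. -/
def decodeTop (G : Multiset (Finset ℕ)) (M : ℕ) : Multiset (Finset ℕ) :=
  if (pick G M).card % 2 = 1 then
    readStairs (G.erase (pick G M)) (pick G M) (hOf (G.erase (pick G M)) (pick G M) - 1)
  else if (pick G M).filter (fun x => M - (pick G M).card/2 < x)
      = Finset.Ioc (M - (pick G M).card/2) M then
    G.erase (pick G M) + ((pick G M).filter (fun x => x ≤ M - (pick G M).card/2)).val.bind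
      (fun v => Multiset.replicate 2 ({v} : Finset ℕ))
  else
    readPairs (G.erase (pick G M)) (pick G M) (hOf (G.erase (pick G M)) (pick G M) - 1)

/-- decoding in the presence of the `{M}` marker (input: `G` with the marker erased). -/
def decodeMark (G : Multiset (Finset ℕ)) (M : ℕ) : Multiset (Finset ℕ) :=
  (G.erase (pick G (M-1))) + Multiset.replicate 2 ((pick G (M-1)).filter
    (fun x => x ≤ M - ((pick G (M-1)).card + 1)/2))

/-- The decoding map. -/
def decode (G : Multiset (Finset ℕ)) : Multiset (Finset ℕ) :=
  if ({fmax G.sup} : Finset ℕ) ∈ G then decodeMark (G.erase {fmax G.sup}) (fmax G.sup)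
  else decodeTop G (fmax G.sup)

/-! ## weight lemmas -/

lemma sysWeight_add (s t : Multiset (Finset ℕ)) :
    sysWeight (s + t) = sysWeight s + sysWeight t := by
  simp [sysWeight]

lemma sysWeight_cons (a : Finset ℕ) (s : Multiset (Finset ℕ)) :
    sysWeight (a ::ₘ s) = a.card + sysWeight s := by
  simp [sysWeight]

lemma sysWeight_replicate (k : ℕ) (E : Finset ℕ) :
    sysWeight (Multiset.replicate k E) = k * E.card := by
  simp [sysWeight, Multiset.map_replicate, Multiset.sum_replicate]

lemma sysWeight_two_smul (s : Multiset (Finset ℕ)) :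
    sysWeight (2 • s) = 2 * sysWeight s := by
  rw [two_nsmul, sysWeight_add]; ring

lemma sysWeight_singleton (E : Finset ℕ) : sysWeight {E} = E.card := by
  simp [sysWeight]

lemma card_le_sysWeight {H : Multiset (Finset ℕ)} (h : ∀ E ∈ H, E.Nonempty) :
    Multiset.card H ≤ sysWeight H := by
  induction H using Multiset.induction with
  | empty => simp [sysWeight]
  | cons a s ih =>
      rw [sysWeight_cons, Multiset.card_cons]
      have h1 : 1 ≤ a.card := Finset.card_pos.mpr (h a (Multiset.mem_cons_self a s))
      have := ih (fun E hE => h E (Multiset.mem_cons_of_mem hE))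
      omega

lemma card_sup_le_sysWeight (H : Multiset (Finset ℕ)) :
    H.sup.card ≤ sysWeight H := by
  induction H using Multiset.induction with
  | empty => simp [sysWeight]
  | cons a s ih =>
      rw [sysWeight_cons, Multiset.sup_cons]
      calc (a ⊔ s.sup).card = (a ∪ s.sup).card := rfl
        _ ≤ a.card + s.sup.card := Finset.card_union_le _ _
        _ ≤ a.card + sysWeight s := by omega

/-! ## decomposition -/

/-- the simple part: one copy of each edge with odd multiplicity. -/
def coreOf (H : Multiset (Finset ℕ)) : Multiset (Finset ℕ) :=
  H.dedup.filter (fun E => H.count E % 2 = 1)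

/-- the excess pairs: each edge with multiplicity `⌊k/2⌋`. -/
def pairsOf (H : Multiset (Finset ℕ)) : Multiset (Finset ℕ) :=
  H.dedup.bind (fun E => Multiset.replicate (H.count E / 2) E)

lemma count_coreOf (H : Multiset (Finset ℕ)) (E : Finset ℕ) :
    (coreOf H).count E = H.count E % 2 := by
  rw [coreOf, Multiset.count_filter]
  by_cases hE : E ∈ H
  · rw [Multiset.count_dedup, if_pos hE]
    split_ifs with h
    · omega
    · omega
  · have : H.count E = 0 := Multiset.count_eq_zero.mpr hE
    rw [Multiset.count_dedup, if_neg hE]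
    split_ifs <;> omega

lemma count_pairsOf (H : Multiset (Finset ℕ)) (E : Finset ℕ) :
    (pairsOf H).count E = H.count E / 2 := by
  rw [pairsOf, Multiset.count_bind]
  simp only [Multiset.count_replicate]
  rw [← Multiset.toFinset_val H]
  have h2 : ((H.toFinset.val.map (fun F => if F = E then H.count F / 2 else 0))).sum
      = ∑ F ∈ H.toFinset, (if F = E then H.count F / 2 else 0) := rfl
  rw [h2, Finset.sum_ite_eq' H.toFinset E (fun F => H.count F / 2)]
  by_cases hE : E ∈ H
  · rw [if_pos (Multiset.mem_toFinset.mpr hE)]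
  · rw [if_neg (fun h => hE (Multiset.mem_toFinset.mp h))]
    have : H.count E = 0 := Multiset.count_eq_zero.mpr hE
    omega

lemma decomp (H : Multiset (Finset ℕ)) : coreOf H + 2 • pairsOf H = H := by
  ext E
  rw [Multiset.count_add, count_coreOf, Multiset.count_nsmul, count_pairsOf]
  omega

lemma mem_pairsOf {H : Multiset (Finset ℕ)} {E : Finset ℕ} :
    E ∈ pairsOf H ↔ 2 ≤ H.count E := by
  rw [← Multiset.count_pos, count_pairsOf]
  omega

lemma mem_coreOf {H : Multiset (Finset ℕ)} {E : Finset ℕ} (h : E ∈ coreOf H) : E ∈ H := by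
  rw [← Multiset.count_pos]
  have := h
  rw [← Multiset.count_pos, count_coreOf] at this
  omega

lemma coreOf_nodup (H : Multiset (Finset ℕ)) : (coreOf H).Nodup :=
  (Multiset.nodup_dedup H).filter _

lemma sup_smul_two (s : Multiset (Finset ℕ)) : (2 • s).sup = s.sup := by
  have : (2:ℕ) • s = s + s := by rw [two_nsmul]
  rw [this, Multiset.sup_add, sup_idem]

lemma sup_decomp (H : Multiset (Finset ℕ)) : (coreOf H).sup ⊔ (pairsOf H).sup = H.sup := by
  conv_rhs => rw [← decomp H]
  rw [Multiset.sup_add, sup_smul_two]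

lemma pairsOf_ne_zero {H : Multiset (Finset ℕ)} (h : ¬ H.Nodup) : pairsOf H ≠ 0 := by
  rw [Multiset.nodup_iff_count_le_one] at h
  push_neg at h
  obtain ⟨E, hE⟩ := h
  intro hz
  have := count_pairsOf H E
  rw [hz] at this
  simp at this
  omega

/-! ## generic facts -/

lemma subset_Icc_le {E : Finset ℕ} {m : ℕ} (h : E ⊆ Finset.Icc 1 m) {x : ℕ} (hx : x ∈ E) :
    x ≤ m := (Finset.mem_Icc.mp (h hx)).2

lemma notmem_of_subset_Icc {E : Finset ℕ} {m M : ℕ} (h : E ⊆ Finset.Icc 1 m) (hM : m < M) :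
    M ∉ E := fun hx => absurd (subset_Icc_le h hx) (by omega)

lemma fmax_le_of_subset_Icc {E : Finset ℕ} {m : ℕ} (h : E ⊆ Finset.Icc 1 m) : fmax E ≤ m :=
  fmax_le fun _ hx => subset_Icc_le h hx

lemma filter_le_shape {E R : Finset ℕ} {m : ℕ} (hE : ∀ x ∈ E, x ≤ m) (hR : ∀ x ∈ R, m < x) :
    (E ∪ R).filter (fun x => x ≤ m) = E := by
  rw [Finset.filter_union, Finset.filter_true_of_mem hE,
    Finset.filter_false_of_mem (fun x hx => by have := hR x hx; omega), Finset.union_empty]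

lemma card_union_shape {E R : Finset ℕ} {m : ℕ} (hE : ∀ x ∈ E, x ≤ m) (hR : ∀ x ∈ R, m < x) :
    (E ∪ R).card = E.card + R.card := by
  rw [Finset.card_union_of_disjoint]
  rw [Finset.disjoint_left]
  intro a ha ha'
  have := hE a ha; have := hR a ha'; omega

/-! ## the stacking machine -/

/-- stack pieces `Eᵢ ∪ (aᵢ, aᵢ + rᵢ]` with consecutive runs starting above `a`. -/
def stack : ℕ → List (Finset ℕ × ℕ) → List (Finset ℕ)
  | _, [] => []
  | a, (E, r) :: t => (E ∪ Finset.Ioc a (a + r)) :: stack (a + r) t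

/-- total run length. -/
def rsum (L : List (Finset ℕ × ℕ)) : ℕ := (L.map Prod.snd).sum

lemma rsum_cons (p : Finset ℕ × ℕ) (t : List (Finset ℕ × ℕ)) :
    rsum (p :: t) = p.2 + rsum t := by simp [rsum]

lemma stack_subset {m : ℕ} :
    ∀ (L : List (Finset ℕ × ℕ)) (a : ℕ), m ≤ a → (∀ p ∈ L, p.1 ⊆ Finset.Icc 1 m) →
    ∀ B ∈ stack a L, B ⊆ Finset.Icc 1 (a + rsum L)
  | [], _, _, _ => by intro B hB; simp [stack] at hB
  | (E, r) :: t, a, ha, hL => by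
      intro B hB
      rw [stack] at hB
      rcases List.mem_cons.mp hB with h | h
      · subst h
        intro x hx
        rcases Finset.mem_union.mp hx with h | h
        · have := Finset.mem_Icc.mp (hL (E, r) (List.mem_cons_self) h)
          rw [Finset.mem_Icc]
          rw [rsum_cons]
          omega
        · rw [Finset.mem_Ioc] at h
          rw [Finset.mem_Icc, rsum_cons]
          omega
      · have := stack_subset (m := m) t (a + r) (by omega)
          (fun p hp => hL p (List.mem_cons_of_mem _ hp)) B h
        intro x hx
        have := Finset.mem_Icc.mp (this hx)
        rw [Finset.mem_Icc, rsum_cons]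
        omega

lemma stack_fresh {m : ℕ} :
    ∀ (L : List (Finset ℕ × ℕ)) (a : ℕ), m ≤ a → (∀ p ∈ L, 1 ≤ p.2) →
    ∀ B ∈ stack a L, a < fmax B
  | [], _, _, _ => by intro B hB; simp [stack] at hB
  | (E, r) :: t, a, ha, hL => by
      intro B hB
      rw [stack] at hB
      rcases List.mem_cons.mp hB with h | h
      · subst h
        have hr : 1 ≤ r := hL (E, r) (List.mem_cons_self)
        have : a + r ∈ E ∪ Finset.Ioc a (a + r) := by
          apply Finset.mem_union_right
          rw [Finset.mem_Ioc]; omega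
        have := le_fmax this
        omega
      · have := stack_fresh (m := m) t (a + r) (by omega)
          (fun p hp => hL p (List.mem_cons_of_mem _ hp)) B h
        have hr : 1 ≤ r := hL (E, r) (List.mem_cons_self)
        omega

lemma stack_map {m : ℕ} :
    ∀ (L : List (Finset ℕ × ℕ)) (a : ℕ), m ≤ a →
    (∀ p ∈ L, p.1 ⊆ Finset.Icc 1 m ∧ 1 ≤ p.2) →
    (stack a L).map (fun B => (B.filter (fun x => x ≤ m), B.card))
      = L.map (fun p => (p.1, p.1.card + p.2))
  | [], _, _, _ => by simp [stack]
  | (E, r) :: t, a, ha, hL => by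
      rw [stack, List.map_cons, List.map_cons]
      have hE : ∀ x ∈ E, x ≤ m :=
        fun x hx => subset_Icc_le (hL (E, r) (List.mem_cons_self)).1 hx
      have hR : ∀ x ∈ Finset.Ioc a (a + r), m < x := by
        intro x hx; rw [Finset.mem_Ioc] at hx; omega
      congr 1
      · rw [Prod.ext_iff]
        constructor
        · exact filter_le_shape hE hR
        · show (E ∪ Finset.Ioc a (a+r)).card = E.card + r
          rw [card_union_shape hE hR, Nat.card_Ioc]
          omega
      · exact stack_map (m := m) t (a + r) (by omega)
          (fun p hp => hL p (List.mem_cons_of_mem _ hp))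

lemma stack_sup {m : ℕ} :
    ∀ (L : List (Finset ℕ × ℕ)) (a : ℕ), m ≤ a →
    (∀ p ∈ L, p.1 ⊆ Finset.Icc 1 m) →
    ((stack a L : Multiset (Finset ℕ))).sup
      = ((L.map Prod.fst : Multiset (Finset ℕ))).sup ∪ Finset.Ioc a (a + rsum L)
  | [], a, _, _ => by simp [stack, rsum]
  | (E, r) :: t, a, ha, hL => by
      rw [stack]
      have : ((((E ∪ Finset.Ioc a (a + r)) :: stack (a + r) t : List (Finset ℕ)))
          : Multiset (Finset ℕ)).sup
          = (E ∪ Finset.Ioc a (a + r)) ⊔ ((stack (a + r) t : Multiset (Finset ℕ))).sup := by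
        rw [← Multiset.cons_coe, Multiset.sup_cons]
      rw [this, stack_sup (m := m) t (a + r) (by omega) (fun p hp => hL p (List.mem_cons_of_mem _ hp))]
      have hrs : ((((E, r) :: t).map Prod.fst : List (Finset ℕ)) : Multiset (Finset ℕ)).sup
          = E ⊔ ((t.map Prod.fst : List (Finset ℕ)) : Multiset (Finset ℕ)).sup := by
        rw [List.map_cons, ← Multiset.cons_coe, Multiset.sup_cons]
      rw [hrs, rsum_cons]
      ext x
      simp only [Finset.sup_eq_union, Finset.mem_union, Finset.mem_Ioc]
      constructor
      · rintro ((h | h) | (h | h))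
        · tauto
        · right; omega
        · tauto
        · right; omega
      · rintro ((h | h) | h)
        · tauto
        · tauto
        · rcases Nat.lt_or_ge (a + r) x with h' | h'
          · right; right; omega
          · left; right; omega

lemma stack_nodup {m : ℕ} :
    ∀ (L : List (Finset ℕ × ℕ)) (a : ℕ), m ≤ a →
    (∀ p ∈ L, p.1 ⊆ Finset.Icc 1 m ∧ 1 ≤ p.2) →
    ((stack a L : Multiset (Finset ℕ))).Nodup
  | [], _, _, _ => by simp [stack]
  | (E, r) :: t, a, ha, hL => by
      rw [stack, ← Multiset.cons_coe, Multiset.nodup_cons]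
      constructor
      · intro hmem
        rw [Multiset.mem_coe] at hmem
        have h1 : a + r < fmax (E ∪ Finset.Ioc a (a + r)) :=
          stack_fresh (m := m) t (a + r) (by omega)
            (fun p hp => (hL p (List.mem_cons_of_mem _ hp)).2) _ hmem
        have h2 : fmax (E ∪ Finset.Ioc a (a + r)) ≤ a + r := by
          apply fmax_le
          intro x hx
          rcases Finset.mem_union.mp hx with h | h
          · have := subset_Icc_le (hL (E, r) (List.mem_cons_self)).1 h
            omega
          · exact (Finset.mem_Ioc.mp h).2
        omega
      · exact stack_nodup (m := m) t (a + r) (by omega)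
          (fun p hp => hL p (List.mem_cons_of_mem _ hp))

lemma stack_weight {m : ℕ} :
    ∀ (L : List (Finset ℕ × ℕ)) (a : ℕ), m ≤ a →
    (∀ p ∈ L, p.1 ⊆ Finset.Icc 1 m) →
    sysWeight (stack a L : Multiset (Finset ℕ))
      = ((L.map (fun p => p.1.card + p.2)).sum)
  | [], _, _, _ => by simp [stack, sysWeight]
  | (E, r) :: t, a, ha, hL => by
      rw [stack, ← Multiset.cons_coe, sysWeight_cons,
        stack_weight (m := m) t (a + r) (by omega) (fun p hp => hL p (List.mem_cons_of_mem _ hp)),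
        List.map_cons, List.sum_cons]
      have hE : ∀ x ∈ E, x ≤ m :=
        fun x hx => subset_Icc_le (hL (E, r) (List.mem_cons_self)) hx
      have hR : ∀ x ∈ Finset.Ioc a (a + r), m < x := by
        intro x hx; rw [Finset.mem_Ioc] at hx; omega
      rw [card_union_shape hE hR, Nat.card_Ioc]
      dsimp only
      omega


/-! ## mode lemmas -/

lemma cover_mem {A B : Finset ℕ} {m : ℕ} (h : A ⊔ B = Finset.Icc 1 m) (x : ℕ) :
    (x ∈ A ∨ x ∈ B) ↔ (1 ≤ x ∧ x ≤ m) := by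
  rw [← Finset.mem_union, ← Finset.sup_eq_union, h, Finset.mem_Icc]

lemma decode_eq_mark {G : Multiset (Finset ℕ)} {M : ℕ} (hs : fmax G.sup = M)
    (h : ({M} : Finset ℕ) ∈ G) : decode G = decodeMark (G.erase {M}) M := by
  rw [decode, hs, if_pos h]

lemma decode_eq_top {G : Multiset (Finset ℕ)} {M : ℕ} (hs : fmax G.sup = M)
    (h : ({M} : Finset ℕ) ∉ G) : decode G = decodeTop G M := by
  rw [decode, hs, if_neg h]

lemma mode_p2 {m : ℕ} (core : Multiset (Finset ℕ)) (E : Finset ℕ)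
    (hE2 : 2 ≤ E.card) (hEm : E ⊆ Finset.Icc 1 m)
    (hcoreM : ∀ B ∈ core, B ⊆ Finset.Icc 1 m) (hcoreNE : ∀ B ∈ core, B.Nonempty)
    (hcnd : core.Nodup)
    (hcover : core.sup ⊔ E = Finset.Icc 1 m) :
    ∃ G : Multiset (Finset ℕ), IsNormalized G ∧
      sysWeight G = sysWeight core + 2 * E.card ∧ G.Nodup ∧
      decode G = core + Multiset.replicate 2 E := by
  have hcov := cover_mem hcover
  set s := E.card with hs
  set M := m + s with hMdef
  set X := E ∪ Finset.Ioc m (m + (s - 1)) with hX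
  have hEle : ∀ x ∈ E, x ≤ m := fun x hx => subset_Icc_le hEm hx
  have hIoc : ∀ x ∈ Finset.Ioc m (m + (s - 1)), m < x := by
    intro x hx; exact (Finset.mem_Ioc.mp hx).1
  have hm1 : 1 ≤ m := by
    obtain ⟨x, hx⟩ := Finset.card_pos.mp (by omega : 0 < E.card)
    have := (Finset.mem_Icc.mp (hEm hx)); omega
  have hXcard : X.card = 2 * s - 1 := by
    rw [hX, card_union_shape hEle hIoc, Nat.card_Ioc]; omega
  have hXfil : X.filter (fun x => x ≤ m) = E := filter_le_shape hEle hIoc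
  have hMX : M - 1 ∈ X := by
    rw [hX]
    apply Finset.mem_union_right
    rw [Finset.mem_Ioc]; omega
  have hsupG : (({M} : Finset ℕ) ::ₘ X ::ₘ core).sup = Finset.Icc 1 M := by
    rw [Multiset.sup_cons, Multiset.sup_cons]
    ext x
    simp only [Finset.sup_eq_union, Finset.mem_union, Finset.mem_singleton, hX,
      Finset.mem_Ioc, Finset.mem_Icc]
    constructor
    · rintro (h | (h | h) | h)
      · omega
      · have := (hcov x).mp (Or.inr h); omega
      · omega
      · have := (hcov x).mp (Or.inl h); omega
    · rintro ⟨h1, h2⟩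
      by_cases hxm : x ≤ m
      · rcases (hcov x).mpr ⟨h1, hxm⟩ with h | h
        · right; right; exact h
        · right; left; left; exact h
      · by_cases hxM : x = M
        · left; exact hxM
        · right; left; right; omega
  refine ⟨({M} : Finset ℕ) ::ₘ X ::ₘ core, ⟨?_, M, hsupG⟩, ?_, ?_, ?_⟩
  · intro B hB
    rcases Multiset.mem_cons.mp hB with h | hB
    · subst h; exact ⟨M, Finset.mem_singleton_self M⟩
    rcases Multiset.mem_cons.mp hB with h | hB
    · subst h
      obtain ⟨x, hx⟩ := Finset.card_pos.mp (by omega : 0 < E.card)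
      exact ⟨x, Finset.mem_union_left _ hx⟩
    · exact hcoreNE _ hB
  · rw [sysWeight_cons, sysWeight_cons, Finset.card_singleton, hXcard]
    omega
  · rw [Multiset.nodup_cons, Multiset.nodup_cons]
    refine ⟨?_, ?_, hcnd⟩
    · intro hmem
      rcases Multiset.mem_cons.mp hmem with h | h
      · have : ({M} : Finset ℕ).card = X.card := by rw [h]
        rw [Finset.card_singleton, hXcard] at this
        omega
      · have := subset_Icc_le (hcoreM _ h) (Finset.mem_singleton_self M)
        omega
    · intro hmem
      have := subset_Icc_le (hcoreM _ hmem) hMX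
      omega
  · have hMfmax : fmax ((({M} : Finset ℕ)) ::ₘ X ::ₘ core).sup = M := by
      rw [hsupG, fmax_Icc]
    rw [decode_eq_mark hMfmax (Multiset.mem_cons_self _ _), Multiset.erase_cons_head]
    have hpick : pick (X ::ₘ core) (M - 1) = X := by
      apply pick_eq (Multiset.mem_cons_self _ _) hMX
      intro B hB
      rw [Multiset.erase_cons_head] at hB
      exact fun hx => absurd (subset_Icc_le (hcoreM _ hB) hx) (by omega)
    rw [decodeMark, hpick, Multiset.erase_cons_head]
    have harith : M - (X.card + 1)/2 = m := by rw [hXcard]; omega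
    rw [harith, hXfil]

lemma filter_gt_shape {E R : Finset ℕ} {m : ℕ} (hE : ∀ x ∈ E, x ≤ m) (hR : ∀ x ∈ R, m < x) :
    (E ∪ R).filter (fun x => m < x) = R := by
  rw [Finset.filter_union, Finset.filter_false_of_mem (fun x hx => by have := hE x hx; omega),
    Finset.filter_true_of_mem hR, Finset.empty_union]

lemma mode_flat {m : ℕ} (core : Multiset (Finset ℕ)) (T : Finset ℕ)
    (hT : T.Nonempty) (hTm : T ⊆ Finset.Icc 1 m)
    (hcoreM : ∀ B ∈ core, B ⊆ Finset.Icc 1 m) (hcoreNE : ∀ B ∈ core, B.Nonempty)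
    (hcnd : core.Nodup)
    (hcover : core.sup ⊔ T = Finset.Icc 1 m) :
    ∃ G : Multiset (Finset ℕ), IsNormalized G ∧
      sysWeight G = sysWeight core + 2 * T.card ∧ G.Nodup ∧
      decode G = core + T.val.bind (fun v => Multiset.replicate 2 ({v} : Finset ℕ)) := by
  have hcov := cover_mem hcover
  set q := T.card with hq
  have hq1 : 1 ≤ q := Finset.card_pos.mpr hT
  set M := m + q with hMdef
  set Z := T ∪ Finset.Ioc m (m + q) with hZ
  have hTle : ∀ x ∈ T, x ≤ m := fun x hx => subset_Icc_le hTm hx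
  have hIoc : ∀ x ∈ Finset.Ioc m (m + q), m < x := by
    intro x hx; exact (Finset.mem_Ioc.mp hx).1
  have hm1 : 1 ≤ m := by
    obtain ⟨x, hx⟩ := hT
    have := (Finset.mem_Icc.mp (hTm hx)); omega
  have hZcard : Z.card = 2 * q := by
    rw [hZ, card_union_shape hTle hIoc, Nat.card_Ioc]; omega
  have hZfil : Z.filter (fun x => x ≤ m) = T := filter_le_shape hTle hIoc
  have hMZ : M ∈ Z := by
    rw [hZ]
    apply Finset.mem_union_right
    rw [Finset.mem_Ioc]; omega
  have hsupG : (Z ::ₘ core).sup = Finset.Icc 1 M := by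
    rw [Multiset.sup_cons]
    ext x
    simp only [Finset.sup_eq_union, Finset.mem_union, hZ, Finset.mem_Ioc, Finset.mem_Icc]
    constructor
    · rintro ((h | h) | h)
      · have := (hcov x).mp (Or.inr h); omega
      · omega
      · have := (hcov x).mp (Or.inl h); omega
    · rintro ⟨h1, h2⟩
      by_cases hxm : x ≤ m
      · rcases (hcov x).mpr ⟨h1, hxm⟩ with h | h
        · right; exact h
        · left; left; exact h
      · left; right; omega
  refine ⟨Z ::ₘ core, ⟨?_, M, hsupG⟩, ?_, ?_, ?_⟩
  · intro B hB
    rcases Multiset.mem_cons.mp hB with h | hB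
    · subst h
      obtain ⟨x, hx⟩ := hT
      exact ⟨x, Finset.mem_union_left _ hx⟩
    · exact hcoreNE _ hB
  · rw [sysWeight_cons, hZcard]
    omega
  · rw [Multiset.nodup_cons]
    refine ⟨?_, hcnd⟩
    intro hmem
    have := subset_Icc_le (hcoreM _ hmem) hMZ
    omega
  · have hMfmax : fmax (Z ::ₘ core).sup = M := by rw [hsupG, fmax_Icc]
    have hnomark : ({M} : Finset ℕ) ∉ (Z ::ₘ core) := by
      intro hmem
      rcases Multiset.mem_cons.mp hmem with h | h
      · have : ({M} : Finset ℕ).card = Z.card := by rw [h]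
        rw [Finset.card_singleton, hZcard] at this
        omega
      · have := subset_Icc_le (hcoreM _ h) (Finset.mem_singleton_self M)
        omega
    rw [decode_eq_top hMfmax hnomark]
    have hpick : pick (Z ::ₘ core) M = Z := by
      apply pick_eq (Multiset.mem_cons_self _ _) hMZ
      intro B hB
      rw [Multiset.erase_cons_head] at hB
      exact fun hx => absurd (subset_Icc_le (hcoreM _ hB) hx) (by omega)
    rw [decodeTop, hpick, Multiset.erase_cons_head]
    rw [if_neg (by rw [hZcard]; omega)]
    have harith : M - Z.card / 2 = m := by rw [hZcard]; omega
    rw [harith]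
    rw [if_pos]
    · rw [hZfil]
    · rw [hZ, filter_gt_shape hTle hIoc, hMdef]

lemma rsum_pos {L : List (Finset ℕ × ℕ)} (h : L ≠ []) (h2 : ∀ p ∈ L, 1 ≤ p.2) :
    1 ≤ rsum L := by
  cases L with
  | nil => exact absurd rfl h
  | cons p t =>
      rw [rsum_cons]
      have := h2 p (List.mem_cons_self)
      omega

lemma list_sum_double (L : List (Finset ℕ)) :
    (L.map (fun E => E.card + E.card)).sum = 2 * (L.map Finset.card).sum := by
  induction L with
  | nil => simp
  | cons E t ih => simp only [List.map_cons, List.sum_cons, ih]; omega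

lemma bind_replicate_two (P : Multiset (Finset ℕ)) :
    P.bind (fun E => Multiset.replicate 2 E) = 2 • P := by
  induction P using Multiset.induction with
  | empty => simp
  | cons a s ih =>
      rw [Multiset.cons_bind, ih]
      ext b
      rw [Multiset.count_add, Multiset.count_replicate, Multiset.count_nsmul,
        Multiset.count_nsmul]
      rcases eq_or_ne a b with rfl | hne
      · rw [Multiset.count_cons_self, if_pos rfl]
        omega
      · rw [Multiset.count_cons_of_ne (Ne.symm hne), if_neg hne]
        omega

lemma mode_h {m : ℕ} (core P : Multiset (Finset ℕ)) (Estar : Finset ℕ)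
    (hEP : Estar ∈ P) (hE2 : 2 ≤ Estar.card)
    (hP : ∀ E ∈ P, E.Nonempty ∧ E ⊆ Finset.Icc 1 m)
    (hP2 : 2 ≤ Multiset.card P)
    (hcoreM : ∀ B ∈ core, B ⊆ Finset.Icc 1 m) (hcoreNE : ∀ B ∈ core, B.Nonempty)
    (hcnd : core.Nodup)
    (hcover : core.sup ⊔ P.sup = Finset.Icc 1 m) :
    ∃ G : Multiset (Finset ℕ), IsNormalized G ∧
      sysWeight G = sysWeight core + 2 * sysWeight P ∧ G.Nodup ∧
      decode G = core + 2 • P := by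
  classical
  have hcov := cover_mem hcover
  set P' := P.erase Estar with hP'
  have hPP' : P = Estar ::ₘ P' := (Multiset.cons_erase hEP).symm
  have hP'card : 1 ≤ Multiset.card P' := by
    have h1 : Multiset.card P' = Multiset.card P - 1 := by
      rw [hP', Multiset.card_erase_of_mem hEP, Nat.pred_eq_sub_one]
    omega
  obtain ⟨L, hL⟩ : ∃ L : List (Finset ℕ), (L : Multiset (Finset ℕ)) = P' :=
    ⟨P'.toList, Multiset.coe_toList P'⟩
  have hLne : L ≠ [] := by
    intro h
    rw [h] at hL
    rw [← hL] at hP'card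
    simp at hP'card
  have hLP' : ∀ E ∈ L, E ∈ P' := by
    intro E hE
    rw [← hL]
    exact Multiset.mem_coe.mpr hE
  have hP'P : ∀ E ∈ P', E ∈ P := fun E hE =>
    Multiset.mem_of_le (hP' ▸ Multiset.erase_le Estar P) hE
  have hLmem : ∀ E ∈ L, E.Nonempty ∧ E ⊆ Finset.Icc 1 m := fun E hE =>
    hP E (hP'P E (hLP' E hE))
  set Lm := L.map (fun E => (E, E.card)) with hLm
  have hLmh : ∀ p ∈ Lm, p.1 ⊆ Finset.Icc 1 m ∧ 1 ≤ p.2 := by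
    intro p hp
    rw [hLm, List.mem_map] at hp
    obtain ⟨E, hE, rfl⟩ := hp
    exact ⟨(hLmem E hE).2, Finset.card_pos.mpr (hLmem E hE).1⟩
  have hLmne : Lm ≠ [] := by
    rw [hLm]
    simp [hLne]
  set c := (m + 1) + rsum Lm with hc
  have hc2 : m + 2 ≤ c := by
    have := rsum_pos hLmne (fun p hp => (hLmh p hp).2)
    omega
  set sstar := Estar.card with hss
  set M := c + (sstar - 1) with hM
  have hcM : c + 1 ≤ M := by omega
  set F := insert (m+1) (Finset.Ioc c M) with hF
  set Xstar := Estar ∪ F with hX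
  set S : Multiset (Finset ℕ) := ((stack (m+1) Lm : List (Finset ℕ)) : Multiset (Finset ℕ))
    with hS
  have hEstarle : ∀ x ∈ Estar, x ≤ m := fun x hx => subset_Icc_le (hP _ hEP).2 hx
  have hm1 : 1 ≤ m := by
    obtain ⟨x, hx⟩ := (hP _ hEP).1
    have := Finset.mem_Icc.mp ((hP _ hEP).2 hx)
    omega
  have hFgt : ∀ x ∈ F, m < x := by
    intro x hx
    rw [hF, Finset.mem_insert] at hx
    rcases hx with rfl | hx
    · omega
    · have := Finset.mem_Ioc.mp hx
      omega
  have hFcard : F.card = sstar := by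
    rw [hF, Finset.card_insert_of_notMem, Nat.card_Ioc]
    · omega
    · intro hmem
      have := Finset.mem_Ioc.mp hmem
      omega
  have hXcard : Xstar.card = 2 * sstar := by
    rw [hX, card_union_shape hEstarle hFgt, hFcard]
    omega
  have hXfil : Xstar.filter (fun x => x ≤ m) = Estar := filter_le_shape hEstarle hFgt
  have hMX : M ∈ Xstar := by
    rw [hX]
    apply Finset.mem_union_right
    rw [hF]
    apply Finset.mem_insert_of_mem
    rw [Finset.mem_Ioc]
    omega
  -- machine facts
  have hSsub : ∀ B ∈ S, B ⊆ Finset.Icc 1 c := by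
    intro B hB
    have := stack_subset (m := m) Lm (m+1) (by omega) (fun p hp => (hLmh p hp).1) B
      (Multiset.mem_coe.mp hB)
    rwa [← hc] at this
  have hSfresh : ∀ B ∈ S, m + 1 < fmax B := fun B hB =>
    stack_fresh (m := m) Lm (m+1) (by omega) (fun p hp => (hLmh p hp).2) B
      (Multiset.mem_coe.mp hB)
  have hSnodup : S.Nodup := stack_nodup (m := m) Lm (m+1) (by omega) hLmh
  have hSmapfil : S.map (fun B => B.filter (fun x => x ≤ m)) = (L : Multiset (Finset ℕ)) := by
    have h0 := stack_map (m := m) Lm (m+1) (by omega) hLmh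
    have h1 : S.map (fun B => (B.filter (fun x => x ≤ m), B.card))
        = ((Lm.map (fun p => (p.1, p.1.card + p.2)) : List ((Finset ℕ) × ℕ))
          : Multiset ((Finset ℕ) × ℕ)) := by
      rw [hS, Multiset.map_coe, h0]
    have h3 : Multiset.map Prod.fst
        ((Lm.map (fun p => (p.1, p.1.card + p.2)) : List ((Finset ℕ) × ℕ))
          : Multiset ((Finset ℕ) × ℕ)) = (L : Multiset (Finset ℕ)) := by
      rw [Multiset.map_coe, List.map_map, hLm, List.map_map]
      have h4 : ((Prod.fst ∘ fun (p : Finset ℕ × ℕ) => (p.1, p.1.card + p.2)) ∘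
          fun (E : Finset ℕ) => (E, E.card)) = id := rfl
      rw [h4, List.map_id]
    calc S.map (fun B => B.filter (fun x => x ≤ m))
        = Multiset.map Prod.fst (S.map (fun B => (B.filter (fun x => x ≤ m), B.card))) := by
          rw [Multiset.map_map]
          rfl
      _ = (L : Multiset (Finset ℕ)) := by rw [h1, h3]
  have hSsup : S.sup = P'.sup ∪ Finset.Ioc (m+1) c := by
    have h0 := stack_sup (m := m) Lm (m+1) (by omega) (fun p hp => (hLmh p hp).1)
    rw [hS, h0, ← hc]
    congr 1
    rw [hLm, List.map_map]
    have h4 : (Prod.fst ∘ fun (E : Finset ℕ) => (E, E.card)) = id := rfl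
    rw [h4, List.map_id, hL]
  have hSweight : sysWeight S = 2 * sysWeight P' := by
    have h0 := stack_weight (m := m) Lm (m+1) (by omega) (fun p hp => (hLmh p hp).1)
    rw [hS, h0, hLm, List.map_map]
    have h1 : ((fun p => p.1.card + p.2) ∘ fun (E : Finset ℕ) => (E, E.card))
        = fun E => E.card + E.card := rfl
    rw [h1, list_sum_double, ← hL]
    simp [sysWeight, Multiset.map_coe, Multiset.sum_coe]
  have hcoresup : ∀ x ∈ core.sup, x ≤ m := by
    intro x hx
    have : core.sup ≤ Finset.Icc 1 m :=
      Multiset.sup_le.mpr (fun B hB => Finset.le_iff_subset.mpr (hcoreM B hB))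
    exact subset_Icc_le (Finset.le_iff_subset.mp this) hx
  have hP'sup : ∀ x ∈ P'.sup, x ≤ m := by
    intro x hx
    have : P'.sup ≤ Finset.Icc 1 m :=
      Multiset.sup_le.mpr (fun B hB => Finset.le_iff_subset.mpr (hP B (hP'P B hB)).2)
    exact subset_Icc_le (Finset.le_iff_subset.mp this) hx
  have hPsupmem : ∀ x, x ∈ P.sup ↔ (x ∈ Estar ∨ x ∈ P'.sup) := by
    intro x
    rw [hPP', Multiset.sup_cons, Finset.sup_eq_union, Finset.mem_union]
  -- the image
  have hsupG : (Xstar ::ₘ (core + S)).sup = Finset.Icc 1 M := by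
    rw [Multiset.sup_cons, Multiset.sup_add, hSsup]
    ext x
    simp only [Finset.sup_eq_union, Finset.mem_union, hX, hF, Finset.mem_insert,
      Finset.mem_Ioc, Finset.mem_Icc]
    constructor
    · rintro ((h | (h | h)) | (h | (h | h)))
      · have := (hcov x).mp (Or.inr ((hPsupmem x).mpr (Or.inl h))); omega
      · omega
      · omega
      · have := (hcov x).mp (Or.inl h); omega
      · have := (hcov x).mp (Or.inr ((hPsupmem x).mpr (Or.inr h))); omega
      · omega
    · rintro ⟨h1, h2⟩
      by_cases hxm : x ≤ m
      · rcases (hcov x).mpr ⟨h1, hxm⟩ with h | h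
        · right; left; exact h
        · rcases (hPsupmem x).mp h with h | h
          · left; left; exact h
          · right; right; left; exact h
      · by_cases hxc : x ≤ c
        · by_cases hxm1 : x = m + 1
          · left; right; left; exact hxm1
          · right; right; right; omega
        · left; right; right; omega
  refine ⟨Xstar ::ₘ (core + S), ⟨?_, M, hsupG⟩, ?_, ?_, ?_⟩
  · intro B hB
    rcases Multiset.mem_cons.mp hB with h | hB
    · subst h
      obtain ⟨x, hx⟩ := (hP _ hEP).1
      exact ⟨x, Finset.mem_union_left _ hx⟩
    rcases Multiset.mem_add.mp hB with h | h
    · exact hcoreNE _ h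
    · have := hSfresh _ h
      rw [Finset.nonempty_iff_ne_empty]
      intro hemp
      rw [hemp] at this
      simp [fmax] at this
  · rw [sysWeight_cons, sysWeight_add, hXcard, hSweight]
    have : sysWeight P = sstar + sysWeight P' := by
      rw [hPP', sysWeight_cons]
    omega
  · rw [Multiset.nodup_cons, Multiset.nodup_add]
    refine ⟨?_, hcnd, hSnodup, ?_⟩
    · intro hmem
      rcases Multiset.mem_add.mp hmem with h | h
      · have := subset_Icc_le (hcoreM _ h) hMX
        omega
      · have := subset_Icc_le (hSsub _ h) hMX
        omega
    · rw [Multiset.disjoint_left]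
      intro B hB hBS
      have h1 := hSfresh _ hBS
      have h2 := fmax_le_of_subset_Icc (hcoreM _ hB)
      omega
  · have hMfmax : fmax ((Xstar ::ₘ (core + S)).sup) = M := by rw [hsupG, fmax_Icc]
    have hnomark : ({M} : Finset ℕ) ∉ (Xstar ::ₘ (core + S)) := by
      intro hmem
      rcases Multiset.mem_cons.mp hmem with h | hmem
      · have : ({M} : Finset ℕ).card = Xstar.card := by rw [h]
        rw [Finset.card_singleton, hXcard] at this
        omega
      rcases Multiset.mem_add.mp hmem with h | h
      · have := subset_Icc_le (hcoreM _ h) (Finset.mem_singleton_self M)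
        omega
      · have := subset_Icc_le (hSsub _ h) (Finset.mem_singleton_self M)
        omega
    rw [decode_eq_top hMfmax hnomark]
    have hpick : pick (Xstar ::ₘ (core + S)) M = Xstar := by
      apply pick_eq (Multiset.mem_cons_self _ _) hMX
      intro B hB
      rw [Multiset.erase_cons_head] at hB
      rcases Multiset.mem_add.mp hB with h | h
      · exact fun hx => absurd (subset_Icc_le (hcoreM _ h) hx) (by omega)
      · exact fun hx => absurd (subset_Icc_le (hSsub _ h) hx) (by omega)
    rw [decodeTop, hpick, Multiset.erase_cons_head]
    rw [if_neg (by rw [hXcard]; omega)]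
    rw [if_neg ?flatne]
    case flatne =>
      intro heq
      have hc1 : M - Xstar.card / 2 = c - 1 := by rw [hXcard]; omega
      rw [hc1] at heq
      have hcmem : c ∈ Finset.Ioc (c-1) M := by rw [Finset.mem_Ioc]; omega
      rw [← heq, Finset.mem_filter] at hcmem
      obtain ⟨hcX, -⟩ := hcmem
      rw [hX, Finset.mem_union, hF, Finset.mem_insert] at hcX
      rcases hcX with h | h | h
      · have := hEstarle _ h; omega
      · omega
      · have := Finset.mem_Ioc.mp h; omega
    -- now the readPairs branch
    have hcsup : fmax ((core + S).sup) = c := by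
      rw [Multiset.sup_add, hSsup]
      apply le_antisymm
      · apply fmax_le
        intro x hx
        rw [Finset.sup_eq_union, Finset.mem_union, Finset.mem_union] at hx
        rcases hx with h | h | h
        · have := hcoresup x h; omega
        · have := hP'sup x h; omega
        · exact (Finset.mem_Ioc.mp h).2
      · apply le_fmax
        rw [Finset.sup_eq_union, Finset.mem_union, Finset.mem_union]
        right; right
        rw [Finset.mem_Ioc]
        omega
    have hhOf : hOf (core + S) Xstar = m + 1 := by
      rw [hOf, hcsup]
      have hfil : Xstar.filter (fun x => x ≤ c) = Estar ∪ {m+1} := by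
        rw [hX, hF, Finset.filter_union, Finset.filter_true_of_mem
          (fun x hx => by have := hEstarle x hx; omega : ∀ x ∈ Estar, x ≤ c)]
        congr 1
        rw [Finset.filter_insert, if_pos (by omega : m + 1 ≤ c),
          Finset.filter_false_of_mem (fun x hx => by
            have := Finset.mem_Ioc.mp hx; omega)]
        rfl
      rw [hfil]
      apply le_antisymm
      · apply fmax_le
        intro x hx
        rcases Finset.mem_union.mp hx with h | h
        · have := hEstarle x h; omega
        · rw [Finset.mem_singleton] at h; omega
      · exact le_fmax (Finset.mem_union_right _ (Finset.mem_singleton_self _))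
    rw [hhOf]
    have hm1' : m + 1 - 1 = m := by omega
    rw [hm1', readPairs]
    have hfilcore : (core + S).filter (fun B => fmax B ≤ m) = core := by
      rw [Multiset.filter_add, Multiset.filter_eq_self.mpr
        (fun B hB => fmax_le_of_subset_Icc (hcoreM _ hB)),
        Multiset.filter_eq_nil.mpr (fun B hB => by have := hSfresh _ hB; omega)]
      rw [add_zero]
    have hfilS : (core + S).filter (fun B => ¬ fmax B ≤ m) = S := by
      rw [Multiset.filter_add, Multiset.filter_eq_nil.mpr
        (fun B hB => by have := fmax_le_of_subset_Icc (hcoreM _ hB); omega),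
        Multiset.filter_eq_self.mpr (fun B hB => by have := hSfresh _ hB; omega)]
      rw [zero_add]
    rw [hfilcore, hfilS, hXfil]
    have hbind : S.bind (fun B => Multiset.replicate 2 (B.filter (fun x => x ≤ m)))
        = 2 • P' := by
      have h1 : S.bind (fun B => Multiset.replicate 2 (B.filter (fun x => x ≤ m)))
          = (S.map (fun B => B.filter (fun x => x ≤ m))).bind
            (fun E => Multiset.replicate 2 E) := by
        rw [Multiset.bind_map]
      rw [h1, hSmapfil, hL, bind_replicate_two]
    rw [hbind]
    have hfin : Multiset.replicate 2 Estar + 2 • P' = 2 • P := by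
      rw [hPP']
      ext b
      rw [Multiset.count_add, Multiset.count_replicate, Multiset.count_nsmul,
        Multiset.count_nsmul]
      rcases eq_or_ne Estar b with rfl | hne
      · rw [Multiset.count_cons_self, if_pos rfl]
        omega
      · rw [Multiset.count_cons_of_ne (Ne.symm hne), if_neg hne]
        omega
    rw [← hfin]


lemma mem_msup {s : Multiset (Finset ℕ)} {x : ℕ} : x ∈ s.sup ↔ ∃ A ∈ s, x ∈ A := by
  induction s using Multiset.induction with
  | empty => simp
  | cons a t ih =>
      rw [Multiset.sup_cons, Finset.sup_eq_union, Finset.mem_union, ih]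
      constructor
      · rintro (h | ⟨A, hA, hx⟩)
        · exact ⟨a, Multiset.mem_cons_self _ _, h⟩
        · exact ⟨A, Multiset.mem_cons_of_mem hA, hx⟩
      · rintro ⟨A, hA, hx⟩
        rcases Multiset.mem_cons.mp hA with rfl | hA
        · exact Or.inl hx
        · exact Or.inr ⟨A, hA, hx⟩

lemma mode_stairs {m : ℕ} (core P : Multiset (Finset ℕ))
    (hPs : ∀ E ∈ P, ∃ v, E = {v} ∧ 1 ≤ v ∧ v ≤ m)
    (hPdup : ¬ P.Nodup)
    (hcoreM : ∀ B ∈ core, B ⊆ Finset.Icc 1 m) (hcoreNE : ∀ B ∈ core, B.Nonempty)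
    (hcnd : core.Nodup)
    (hcover : core.sup ⊔ P.sup = Finset.Icc 1 m) :
    ∃ G : Multiset (Finset ℕ), IsNormalized G ∧
      sysWeight G = sysWeight core + 2 * sysWeight P ∧ G.Nodup ∧
      decode G = core + 2 • P := by
  classical
  have hcov := cover_mem hcover
  obtain ⟨Ej, hEj2⟩ : ∃ E, 2 ≤ P.count E := by
    rw [Multiset.nodup_iff_count_le_one] at hPdup
    push_neg at hPdup
    obtain ⟨E, hE⟩ := hPdup
    exact ⟨E, by omega⟩
  have hEjP : Ej ∈ P := by rw [← Multiset.count_pos]; omega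
  obtain ⟨vj, hvj, hvj1, hvjm⟩ := hPs Ej hEjP
  set pj := P.count Ej with hpj
  set W := P.toFinset.erase Ej with hW
  set Q : Multiset (Finset ℕ) := W.val with hQ
  have hQnodup : Q.Nodup := W.nodup
  have hQmem : ∀ B, B ∈ Q ↔ (B ∈ P ∧ B ≠ Ej) := by
    intro B
    rw [hQ, ← Finset.mem_def, hW, Finset.mem_erase, Multiset.mem_toFinset]
    tauto
  obtain ⟨Wl, hWl⟩ : ∃ Wl : List (Finset ℕ), (Wl : Multiset (Finset ℕ)) = Q :=
    ⟨Q.toList, Multiset.coe_toList Q⟩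
  set Lm := ((∅ : Finset ℕ), 1) :: Wl.map (fun A => (A, 2 * P.count A - 1)) with hLm
  have hWlP : ∀ A ∈ Wl, A ∈ P ∧ A ≠ Ej := by
    intro A hA
    rw [← hQmem]
    rw [← hWl]
    exact Multiset.mem_coe.mpr hA
  have hLmh : ∀ p ∈ Lm, p.1 ⊆ Finset.Icc 1 m ∧ 1 ≤ p.2 := by
    intro p hp
    rw [hLm, List.mem_cons] at hp
    rcases hp with rfl | hp
    · exact ⟨by simp, le_rfl⟩
    · rw [List.mem_map] at hp
      obtain ⟨A, hA, rfl⟩ := hp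
      have hAP := (hWlP A hA).1
      have hcA : 1 ≤ P.count A := Multiset.count_pos.mpr hAP
      obtain ⟨v, hAv, hv1, hvm⟩ := hPs A hAP
      constructor
      · intro x hx
        rw [hAv, Finset.mem_singleton] at hx
        subst hx
        rw [Finset.mem_Icc]
        exact ⟨hv1, hvm⟩
      · dsimp only
        omega
  set c := (m + 1) + rsum Lm with hc
  have hc2 : m + 2 ≤ c := by
    rw [hc, hLm, rsum_cons]
    omega
  set M := c + (2 * pj - 3) with hM
  have hcM : c + 1 ≤ M := by omega
  set F := insert (m+1) (Finset.Ioc c M) with hF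
  set D := {vj} ∪ F with hD
  set S : Multiset (Finset ℕ) := ((stack (m+1) Lm : List (Finset ℕ)) : Multiset (Finset ℕ))
    with hS
  have hvjle : ∀ x ∈ ({vj} : Finset ℕ), x ≤ m := by
    intro x hx; rw [Finset.mem_singleton] at hx; omega
  have hFgt : ∀ x ∈ F, m < x := by
    intro x hx
    rw [hF, Finset.mem_insert] at hx
    rcases hx with rfl | hx
    · omega
    · have := Finset.mem_Ioc.mp hx
      omega
  have hFcard : F.card = 2 * pj - 2 := by
    rw [hF, Finset.card_insert_of_notMem, Nat.card_Ioc]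
    · omega
    · intro hmem
      have := Finset.mem_Ioc.mp hmem
      omega
  have hDcard : D.card = 2 * pj - 1 := by
    rw [hD, card_union_shape hvjle hFgt, hFcard, Finset.card_singleton]
    omega
  have hDfil : D.filter (fun x => x ≤ m) = {vj} := filter_le_shape hvjle hFgt
  have hMD : M ∈ D := by
    rw [hD]
    apply Finset.mem_union_right
    rw [hF]
    apply Finset.mem_insert_of_mem
    rw [Finset.mem_Ioc]
    omega
  -- machine facts
  have hSsub : ∀ B ∈ S, B ⊆ Finset.Icc 1 c := by
    intro B hB
    have := stack_subset (m := m) Lm (m+1) (by omega) (fun p hp => (hLmh p hp).1) B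
      (Multiset.mem_coe.mp hB)
    rwa [← hc] at this
  have hSfresh : ∀ B ∈ S, m + 1 < fmax B := fun B hB =>
    stack_fresh (m := m) Lm (m+1) (by omega) (fun p hp => (hLmh p hp).2) B
      (Multiset.mem_coe.mp hB)
  have hSnodup : S.Nodup := stack_nodup (m := m) Lm (m+1) (by omega) hLmh
  have hSmappair : S.map (fun B => (B.filter (fun x => x ≤ m), B.card))
      = ((Lm.map (fun p => (p.1, p.1.card + p.2)) : List ((Finset ℕ) × ℕ))
        : Multiset ((Finset ℕ) × ℕ)) := by
    rw [hS, Multiset.map_coe, stack_map (m := m) Lm (m+1) (by omega) hLmh]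
  have hSsup : S.sup = Q.sup ∪ Finset.Ioc (m+1) c := by
    have h0 := stack_sup (m := m) Lm (m+1) (by omega) (fun p hp => (hLmh p hp).1)
    rw [hS, h0, ← hc]
    congr 1
    rw [hLm, List.map_cons, List.map_map]
    have h4 : (Prod.fst ∘ fun (A : Finset ℕ) => (A, 2 * P.count A - 1)) = id := rfl
    rw [h4, List.map_id]
    rw [← Multiset.cons_coe, Multiset.sup_cons, hWl]
    simp
  have hWlcard : ∀ A ∈ Wl, A.card = 1 ∧ 1 ≤ P.count A := by
    intro A hA
    obtain ⟨v, hAv, _, _⟩ := hPs A (hWlP A hA).1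
    exact ⟨by rw [hAv]; simp, Multiset.count_pos.mpr (hWlP A hA).1⟩
  have hPsupmem : ∀ x, x ∈ P.sup ↔ ({x} : Finset ℕ) ∈ P := by
    intro x
    rw [mem_msup]
    constructor
    · rintro ⟨A, hA, hx⟩
      obtain ⟨v, rfl, _, _⟩ := hPs A hA
      rw [Finset.mem_singleton] at hx
      subst hx
      exact hA
    · intro h
      exact ⟨{x}, h, Finset.mem_singleton_self x⟩
  have hQsupmem : ∀ x, x ∈ Q.sup ↔ (({x} : Finset ℕ) ∈ P ∧ ({x} : Finset ℕ) ≠ Ej) := by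
    intro x
    rw [mem_msup]
    constructor
    · rintro ⟨A, hA, hx⟩
      have h1 := (hQmem A).mp hA
      obtain ⟨v, rfl, _, _⟩ := hPs A h1.1
      rw [Finset.mem_singleton] at hx
      subst hx
      exact h1
    · rintro ⟨h1, h2⟩
      exact ⟨{x}, (hQmem _).mpr ⟨h1, h2⟩, Finset.mem_singleton_self x⟩
  have hEjW : Ej ∉ W := by rw [hW]; exact Finset.notMem_erase _ _
  have hinsert : insert Ej W = P.toFinset := by
    rw [hW]
    exact Finset.insert_erase (Multiset.mem_toFinset.mpr hEjP)
  have hsupG : (D ::ₘ (core + S)).sup = Finset.Icc 1 M := by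
    rw [Multiset.sup_cons, Multiset.sup_add, hSsup]
    ext x
    simp only [Finset.sup_eq_union, Finset.mem_union, hD, hF, Finset.mem_insert,
      Finset.mem_Ioc, Finset.mem_Icc, Finset.mem_singleton]
    constructor
    · rintro ((h | (h | h)) | (h | (h | h)))
      · have hx : ({x} : Finset ℕ) ∈ P := by rw [h, ← hvj]; exact hEjP
        have := (hcov x).mp (Or.inr ((hPsupmem x).mpr hx))
        omega
      · omega
      · omega
      · have := (hcov x).mp (Or.inl h); omega
      · have := (hcov x).mp (Or.inr ((hPsupmem x).mpr ((hQsupmem x).mp h).1)); omega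
      · omega
    · rintro ⟨h1, h2⟩
      by_cases hxm : x ≤ m
      · rcases (hcov x).mpr ⟨h1, hxm⟩ with h | h
        · right; left; exact h
        · rcases eq_or_ne ({x} : Finset ℕ) Ej with he | he
          · left; left
            rw [hvj] at he
            exact Finset.singleton_injective he
          · right; right; left
            exact (hQsupmem x).mpr ⟨(hPsupmem x).mp h, he⟩
      · by_cases hxc : x ≤ c
        · by_cases hxm1 : x = m + 1
          · left; right; left; exact hxm1
          · right; right; right; omega
        · left; right; right; omega
  -- weights
  have hT1 : sysWeight S = 1 + ∑ A ∈ W, (2 * P.count A) := by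
    have h0 := stack_weight (m := m) Lm (m+1) (by omega) (fun p hp => (hLmh p hp).1)
    rw [hS, h0, hLm, List.map_cons, List.sum_cons, List.map_map]
    have h1 : ((fun p => p.1.card + p.2) ∘ fun (A : Finset ℕ) => (A, 2 * P.count A - 1))
        = fun A => A.card + (2 * P.count A - 1) := rfl
    rw [h1]
    have h2 : (Wl.map (fun A => A.card + (2 * P.count A - 1))).sum
        = ((Wl : Multiset (Finset ℕ)).map (fun A => A.card + (2 * P.count A - 1))).sum := by
      rw [Multiset.map_coe, Multiset.sum_coe]
    have h3 : ((Wl : Multiset (Finset ℕ)).map (fun A => A.card + (2 * P.count A - 1))).sum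
        = ∑ A ∈ W, (A.card + (2 * P.count A - 1)) := by
      rw [hWl, hQ]
      rfl
    have h4 : ∑ A ∈ W, (A.card + (2 * P.count A - 1)) = ∑ A ∈ W, (2 * P.count A) := by
      apply Finset.sum_congr rfl
      intro A hA
      have h5 : A.card = 1 ∧ 1 ≤ P.count A := by
        apply hWlcard
        have : A ∈ Q := by rw [hQ]; exact hA
        rw [← hWl] at this
        exact Multiset.mem_coe.mp this
      omega
    simp only [Finset.card_empty]
    omega
  have hwP : sysWeight P = pj + ∑ A ∈ W, P.count A := by
    have h1 : sysWeight P = Multiset.card P := by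
      rw [sysWeight]
      have : P.map Finset.card = P.map (fun _ => 1) := by
        apply Multiset.map_congr rfl
        intro A hA
        obtain ⟨v, rfl, _, _⟩ := hPs A hA
        simp
      rw [this, Multiset.map_const', Multiset.sum_replicate, smul_eq_mul, mul_one]
    have h2 : ∑ A ∈ P.toFinset, P.count A = Multiset.card P :=
      Multiset.toFinset_sum_count_eq P
    rw [← hinsert, Finset.sum_insert hEjW] at h2
    omega
  have hcoresup : ∀ x ∈ core.sup, x ≤ m := by
    intro x hx
    rw [mem_msup] at hx
    obtain ⟨A, hA, hxA⟩ := hx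
    exact subset_Icc_le (hcoreM _ hA) hxA
  refine ⟨D ::ₘ (core + S), ⟨?_, M, hsupG⟩, ?_, ?_, ?_⟩
  · intro B hB
    rcases Multiset.mem_cons.mp hB with h | hB
    · subst h
      exact ⟨vj, Finset.mem_union_left _ (Finset.mem_singleton_self vj)⟩
    rcases Multiset.mem_add.mp hB with h | h
    · exact hcoreNE _ h
    · have := hSfresh _ h
      rw [Finset.nonempty_iff_ne_empty]
      intro hemp
      rw [hemp] at this
      simp [fmax] at this
  · rw [sysWeight_cons, sysWeight_add, hDcard, hT1, hwP]
    have hsum : ∑ A ∈ W, 2 * P.count A = 2 * ∑ A ∈ W, P.count A := by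
      rw [Finset.mul_sum]
    omega
  · rw [Multiset.nodup_cons, Multiset.nodup_add]
    refine ⟨?_, hcnd, hSnodup, ?_⟩
    · intro hmem
      rcases Multiset.mem_add.mp hmem with h | h
      · have := subset_Icc_le (hcoreM _ h) hMD
        omega
      · have := subset_Icc_le (hSsub _ h) hMD
        omega
    · rw [Multiset.disjoint_left]
      intro B hB hBS
      have h1 := hSfresh _ hBS
      have h2 := fmax_le_of_subset_Icc (hcoreM _ hB)
      omega
  · have hMfmax : fmax ((D ::ₘ (core + S)).sup) = M := by rw [hsupG, fmax_Icc]
    have hnomark : ({M} : Finset ℕ) ∉ (D ::ₘ (core + S)) := by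
      intro hmem
      rcases Multiset.mem_cons.mp hmem with h | hmem
      · have : ({M} : Finset ℕ).card = D.card := by rw [h]
        rw [Finset.card_singleton, hDcard] at this
        omega
      rcases Multiset.mem_add.mp hmem with h | h
      · have := subset_Icc_le (hcoreM _ h) (Finset.mem_singleton_self M)
        omega
      · have := subset_Icc_le (hSsub _ h) (Finset.mem_singleton_self M)
        omega
    rw [decode_eq_top hMfmax hnomark]
    have hpick : pick (D ::ₘ (core + S)) M = D := by
      apply pick_eq (Multiset.mem_cons_self _ _) hMD
      intro B hB
      rw [Multiset.erase_cons_head] at hB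
      rcases Multiset.mem_add.mp hB with h | h
      · exact fun hx => absurd (subset_Icc_le (hcoreM _ h) hx) (by omega)
      · exact fun hx => absurd (subset_Icc_le (hSsub _ h) hx) (by omega)
    rw [decodeTop, hpick, Multiset.erase_cons_head]
    rw [if_pos (by rw [hDcard]; omega)]
    have hcsup : fmax ((core + S).sup) = c := by
      rw [Multiset.sup_add, hSsup]
      apply le_antisymm
      · apply fmax_le
        intro x hx
        rw [Finset.sup_eq_union, Finset.mem_union, Finset.mem_union] at hx
        rcases hx with h | h | h
        · have := hcoresup x h; omega
        · have h2 := (hQsupmem x).mp h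
          have := (hcov x).mp (Or.inr ((hPsupmem x).mpr h2.1))
          omega
        · exact (Finset.mem_Ioc.mp h).2
      · apply le_fmax
        rw [Finset.sup_eq_union, Finset.mem_union, Finset.mem_union]
        right; right
        rw [Finset.mem_Ioc]
        omega
    have hhOf : hOf (core + S) D = m + 1 := by
      rw [hOf, hcsup]
      have hfil : D.filter (fun x => x ≤ c) = {vj} ∪ {m+1} := by
        rw [hD, hF, Finset.filter_union, Finset.filter_true_of_mem
          (fun x hx => by have := hvjle x hx; omega : ∀ x ∈ ({vj} : Finset ℕ), x ≤ c)]
        congr 1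
        rw [Finset.filter_insert, if_pos (by omega : m + 1 ≤ c),
          Finset.filter_false_of_mem (fun x hx => by
            have := Finset.mem_Ioc.mp hx; omega)]
        rfl
      rw [hfil]
      apply le_antisymm
      · apply fmax_le
        intro x hx
        rcases Finset.mem_union.mp hx with h | h
        · have := hvjle x h; omega
        · rw [Finset.mem_singleton] at h; omega
      · exact le_fmax (Finset.mem_union_right _ (Finset.mem_singleton_self _))
    rw [hhOf]
    have hm1' : m + 1 - 1 = m := by omega
    rw [hm1', readStairs]
    have hfilcore : (core + S).filter (fun B => fmax B ≤ m) = core := by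
      rw [Multiset.filter_add, Multiset.filter_eq_self.mpr
        (fun B hB => fmax_le_of_subset_Icc (hcoreM _ hB)),
        Multiset.filter_eq_nil.mpr (fun B hB => by have := hSfresh _ hB; omega)]
      rw [add_zero]
    have hfilS : (core + S).filter (fun B => ¬ fmax B ≤ m) = S := by
      rw [Multiset.filter_add, Multiset.filter_eq_nil.mpr
        (fun B hB => by have := fmax_le_of_subset_Icc (hcoreM _ hB); omega),
        Multiset.filter_eq_self.mpr (fun B hB => by have := hSfresh _ hB; omega)]
      rw [zero_add]
    rw [hfilcore, hfilS, hDfil, hDcard]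
    have h2pj : 2 * pj - 1 + 1 = 2 * pj := by omega
    rw [h2pj]
    have hfin : Multiset.replicate (2 * pj) ({vj} : Finset ℕ)
        + S.bind (fun B => Multiset.replicate (2*(B.card/2)) (B.filter (fun x => x ≤ m)))
        = 2 • P := by
      ext B
      rw [Multiset.count_add, Multiset.count_replicate, Multiset.count_nsmul,
        Multiset.count_bind]
      have hmapc : S.map (fun A => (Multiset.replicate (2*(A.card/2))
          (A.filter (fun x => x ≤ m))).count B)
          = S.map ((fun p => if p.1 = B then 2*(p.2/2) else 0) ∘
              (fun A => (A.filter (fun x => x ≤ m), A.card))) := by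
        apply Multiset.map_congr rfl
        intro A _
        rw [Function.comp_apply, Multiset.count_replicate]
      rw [hmapc, ← Multiset.map_map, hSmappair]
      rw [Multiset.map_coe, Multiset.sum_coe, hLm, List.map_cons, List.map_cons,
        List.sum_cons, List.map_map, List.map_map]
      have hhead : (if ((∅:Finset ℕ) = B) then 2 * ((Finset.card (∅:Finset ℕ) + 1) / 2) else 0) = 0 := by
        split_ifs <;> simp
      dsimp only
      rw [hhead]
      have htail : Wl.map (((fun p => if p.1 = B then 2*(p.2/2) else 0) ∘
            (fun (p : Finset ℕ × ℕ) => (p.1, p.1.card + p.2))) ∘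
            (fun A => (A, 2 * P.count A - 1)))
          = Wl.map (fun A => if A = B then 2 * P.count A else 0) := by
        apply List.map_congr_left
        intro A hA
        dsimp only [Function.comp_apply]
        have h5 := hWlcard A hA
        congr 1
        omega
      rw [htail]
      have hsumW : (Wl.map (fun A => if A = B then 2 * P.count A else 0)).sum
          = ∑ A ∈ W, (if A = B then 2 * P.count A else 0) := by
        rw [← Multiset.sum_coe, ← Multiset.map_coe, hWl, hQ]
        rfl
      rw [hsumW, Finset.sum_ite_eq' W B (fun A => 2 * P.count A)]
      rcases eq_or_ne B Ej with rfl | hne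
      · rw [if_pos hvj.symm, if_neg hEjW]
        omega
      · rw [if_neg (fun h => hne (by rw [← hvj] at h; exact h.symm))]
        by_cases hBW : B ∈ W
        · rw [if_pos hBW]
          omega
        · rw [if_neg hBW]
          have hzero : P.count B = 0 := by
            rw [Multiset.count_eq_zero]
            intro hBP
            apply hBW
            have : B ∈ Q := (hQmem B).mpr ⟨hBP, hne⟩
            rw [hQ] at this
            exact this
          omega
    rw [← hfin]



lemma singleton_smul_two (E : Finset ℕ) :
    (2 : ℕ) • ({E} : Multiset (Finset ℕ)) = Multiset.replicate 2 E := by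
  ext B
  rw [Multiset.count_nsmul, Multiset.count_replicate, Multiset.count_singleton]
  split_ifs with h1 h2 h2
  · omega
  · exact absurd h1.symm h2
  · exact absurd h2.symm h1
  · omega

lemma main_exists {n : ℕ} (H : Multiset (Finset ℕ)) (hN : IsNormalized H)
    (hw : sysWeight H = n) (hnd : ¬ H.Nodup) :
    ∃ G : Multiset (Finset ℕ), (IsNormalized G ∧ sysWeight G = n ∧ G.Nodup) ∧ decode G = H := by
  classical
  obtain ⟨hne, m, hsup⟩ := hN
  set P := pairsOf H with hPdef
  set core := coreOf H with hcoredef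
  have hdec : core + 2 • P = H := decomp H
  have hPne : P ≠ 0 := pairsOf_ne_zero hnd
  have hPmem : ∀ E ∈ P, E ∈ H := by
    intro E hE
    have h1 := mem_pairsOf.mp hE
    rw [← Multiset.count_pos]
    omega
  have hHm : ∀ E ∈ H, E ⊆ Finset.Icc 1 m := by
    intro E hE
    have h1 : E ≤ H.sup := Multiset.le_sup hE
    rw [hsup] at h1
    exact Finset.le_iff_subset.mp h1
  have hcoreM : ∀ B ∈ core, B ⊆ Finset.Icc 1 m := fun B hB => hHm B (mem_coreOf hB)
  have hcoreNE : ∀ B ∈ core, B.Nonempty := fun B hB => hne B (mem_coreOf hB)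
  have hcnd : core.Nodup := coreOf_nodup H
  have hcover : core.sup ⊔ P.sup = Finset.Icc 1 m := by
    rw [hcoredef, hPdef, sup_decomp, hsup]
  have hwH : sysWeight core + 2 * sysWeight P = n := by
    rw [← hw]
    conv_rhs => rw [← hdec]
    rw [sysWeight_add, sysWeight_two_smul]
  by_cases hsing : ∀ E ∈ P, E.card = 1
  · have hPs : ∀ E ∈ P, ∃ v, E = {v} ∧ 1 ≤ v ∧ v ≤ m := by
      intro E hE
      obtain ⟨v, hv⟩ := Finset.card_eq_one.mp (hsing E hE)
      refine ⟨v, hv, ?_⟩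
      have hvE : v ∈ E := by rw [hv]; exact Finset.mem_singleton_self v
      have := Finset.mem_Icc.mp (hHm E (hPmem E hE) hvE)
      omega
    by_cases hdup : P.Nodup
    · -- FLAT
      set T := P.sup with hT
      have hTmem : ∀ x, x ∈ T ↔ ({x} : Finset ℕ) ∈ P := by
        intro x
        rw [hT, mem_msup]
        constructor
        · rintro ⟨A, hA, hx⟩
          obtain ⟨v, rfl, _, _⟩ := hPs A hA
          rw [Finset.mem_singleton] at hx
          subst hx
          exact hA
        · intro h
          exact ⟨{x}, h, Finset.mem_singleton_self x⟩
      have hTne : T.Nonempty := by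
        obtain ⟨E, hE⟩ := Multiset.exists_mem_of_ne_zero hPne
        obtain ⟨v, rfl, _, _⟩ := hPs E hE
        exact ⟨v, (hTmem v).mpr hE⟩
      have hTm : T ⊆ Finset.Icc 1 m := by
        intro x hx
        obtain ⟨v, hv, h1, h2⟩ := hPs {x} ((hTmem x).mp hx)
        rw [Finset.mem_Icc]
        have : x = v := Finset.singleton_injective hv
        omega
      have hs2 : T.val.map (fun v => ({v} : Finset ℕ)) = P := by
        ext B
        by_cases hBs : ∃ v, B = ({v} : Finset ℕ)
        · obtain ⟨v, rfl⟩ := hBs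
          rw [Multiset.count_map_eq_count' _ _ Finset.singleton_injective]
          have hTv : Multiset.count v T.val = if v ∈ T then 1 else 0 := by
            split_ifs with h
            · exact Multiset.count_eq_one_of_mem T.nodup (Finset.mem_def.mp h)
            · exact Multiset.count_eq_zero.mpr (fun hm => h (Finset.mem_def.mpr hm))
          rw [hTv]
          by_cases hvP : ({v} : Finset ℕ) ∈ P
          · rw [if_pos ((hTmem v).mpr hvP)]
            exact (Multiset.count_eq_one_of_mem hdup hvP).symm
          · rw [if_neg (fun h => hvP ((hTmem v).mp h))]
            exact (Multiset.count_eq_zero.mpr hvP).symm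
        · have hl : Multiset.count B (T.val.map (fun v => ({v} : Finset ℕ))) = 0 := by
            rw [Multiset.count_eq_zero]
            intro hmem
            obtain ⟨v, _, hv⟩ := Multiset.mem_map.mp hmem
            exact hBs ⟨v, hv.symm⟩
          have hr : Multiset.count B P = 0 := by
            rw [Multiset.count_eq_zero]
            intro hBP
            obtain ⟨v, hv, _, _⟩ := hPs B hBP
            exact hBs ⟨v, hv⟩
          rw [hl, hr]
      obtain ⟨G, h1, h2, h3, h4⟩ := mode_flat core T hTne hTm hcoreM hcoreNE hcnd hcover
      refine ⟨G, ⟨h1, ?_, h3⟩, ?_⟩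
      · rw [h2, ← hwH]
        have hs1 : sysWeight P = Multiset.card P := by
          rw [sysWeight]
          have hmc : P.map Finset.card = P.map (fun _ => 1) :=
            Multiset.map_congr rfl (fun A hA => hsing A hA)
          rw [hmc, Multiset.map_const', Multiset.sum_replicate, smul_eq_mul, mul_one]
        have hTP : T.card = sysWeight P := by
          rw [hs1, ← hs2, Multiset.card_map]
          rfl
        rw [hTP]
      · rw [h4, ← hdec]
        congr 1
        calc T.val.bind (fun v => Multiset.replicate 2 ({v} : Finset ℕ))
            = (T.val.map (fun v => ({v} : Finset ℕ))).bind
                (fun E => Multiset.replicate 2 E) := by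
              rw [Multiset.bind_map]
          _ = 2 • P := by rw [hs2, bind_replicate_two]
    · -- STAIRS
      obtain ⟨G, h1, h2, h3, h4⟩ := mode_stairs core P hPs hdup hcoreM hcoreNE hcnd hcover
      exact ⟨G, ⟨h1, by rw [h2, hwH], h3⟩, by rw [h4, hdec]⟩
  · push_neg at hsing
    obtain ⟨Estar, hEP, hcard⟩ := hsing
    have hE2 : 2 ≤ Estar.card := by
      have h1 : 1 ≤ Estar.card := Finset.card_pos.mpr (hne Estar (hPmem Estar hEP))
      omega
    have hP' : ∀ E ∈ P, E.Nonempty ∧ E ⊆ Finset.Icc 1 m := fun E hE =>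
      ⟨hne E (hPmem E hE), hHm E (hPmem E hE)⟩
    by_cases hcard1 : Multiset.card P = 1
    · have hPsingleton : P = {Estar} := by
        have h0 : Multiset.card (P.erase Estar) = 0 := by
          have h := Multiset.card_erase_of_mem hEP
          rw [Nat.pred_eq_sub_one] at h
          omega
        rw [Multiset.card_eq_zero] at h0
        rw [← Multiset.cons_erase hEP, h0]
        rfl
      have hcover2 : core.sup ⊔ Estar = Finset.Icc 1 m := by
        rw [← hcover, hPsingleton, Multiset.sup_singleton]
      obtain ⟨G, h1, h2, h3, h4⟩ := mode_p2 core Estar hE2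
        (hHm Estar (hPmem Estar hEP)) hcoreM hcoreNE hcnd hcover2
      refine ⟨G, ⟨h1, ?_, h3⟩, ?_⟩
      · rw [h2, ← hwH, hPsingleton, sysWeight_singleton]
      · rw [h4, ← hdec, hPsingleton, singleton_smul_two]
    · have hcard2 : 2 ≤ Multiset.card P := by
        have h1 : P ≠ 0 := hPne
        have h2 : 0 < Multiset.card P := Multiset.card_pos.mpr h1
        omega
      obtain ⟨G, h1, h2, h3, h4⟩ := mode_h core P Estar hEP hE2 hP' hcard2
        hcoreM hcoreNE hcnd hcover
      exact ⟨G, ⟨h1, by rw [h2, hwH], h3⟩, by rw [h4, hdec]⟩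

/-! ## finiteness and the final count -/

lemma finite_aux (n : ℕ) :
    {H : Multiset (Finset ℕ) | IsNormalized H ∧ sysWeight H = n}.Finite := by
  classical
  apply Set.Finite.subset (Set.finite_mem_finset
    (((n+1) • ((Finset.Icc 1 n).powerset.val)).powerset.toFinset))
  rintro H ⟨⟨hne, m, hsup⟩, hw⟩
  simp only [Set.mem_setOf_eq, Finset.mem_coe, Multiset.mem_toFinset, Multiset.mem_powerset]
  rw [Multiset.le_iff_count]
  intro E
  by_cases hE : E ∈ H
  · have hle : Multiset.count E H ≤ n := by
      have h1 : Multiset.count E H ≤ Multiset.card H := Multiset.count_le_card E H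
      have h2 : Multiset.card H ≤ sysWeight H := card_le_sysWeight hne
      omega
    have hmn : m ≤ n := by
      have h3 := card_sup_le_sysWeight H
      rw [hsup, Nat.card_Icc] at h3
      omega
    have hEsub : E ⊆ Finset.Icc 1 n := by
      intro x hx
      have h4 : E ≤ H.sup := Multiset.le_sup hE
      rw [hsup] at h4
      have h5 := Finset.mem_Icc.mp (Finset.le_iff_subset.mp h4 hx)
      rw [Finset.mem_Icc]
      omega
    rw [Multiset.count_nsmul]
    have hcnt : Multiset.count E ((Finset.Icc 1 n).powerset.val) = 1 :=
      Multiset.count_eq_one_of_mem ((Finset.Icc 1 n).powerset.nodup)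
        (Finset.mem_def.mp (Finset.mem_powerset.mpr hEsub))
    rw [hcnt]
    omega
  · rw [Multiset.count_eq_zero.mpr hE]
    omega

lemma finite1 (n : ℕ) :
    Finite {H : Multiset (Finset ℕ) // IsNormalized H ∧ sysWeight H = n} :=
  (finite_aux n).to_subtype

lemma finite2 (n : ℕ) :
    Finite {H : Multiset (Finset ℕ) // IsNormalized H ∧ sysWeight H = n ∧ H.Nodup} := by
  have := finite1 n
  exact Finite.of_injective
    (fun x => (⟨x.1, x.2.1, x.2.2.1⟩ :
      {H : Multiset (Finset ℕ) // IsNormalized H ∧ sysWeight H = n}))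
    (by intro a b hab; have h := congrArg Subtype.val hab; exact Subtype.ext h)

lemma finite3 (n : ℕ) :
    Finite {H : Multiset (Finset ℕ) // (IsNormalized H ∧ sysWeight H = n) ∧ ¬ H.Nodup} := by
  have := finite1 n
  exact Finite.of_injective
    (fun x => (⟨x.1, x.2.1⟩ :
      {H : Multiset (Finset ℕ) // IsNormalized H ∧ sysWeight H = n}))
    (by intro a b hab; have h := congrArg Subtype.val hab; exact Subtype.ext h)

lemma finite4 (n : ℕ) :
    Finite {H : Multiset (Finset ℕ) // (IsNormalized H ∧ sysWeight H = n) ∧ H.Nodup} := by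
  have := finite1 n
  exact Finite.of_injective
    (fun x => (⟨x.1, x.2.1⟩ :
      {H : Multiset (Finset ℕ) // IsNormalized H ∧ sysWeight H = n}))
    (by intro a b hab; have h := congrArg Subtype.val hab; exact Subtype.ext h)

end Klazar


/-- `hpp n` = `hₙ''`, the number of normalized set systems (multisets of edges allowed)
of weight `n`. -/
noncomputable def hpp (n : ℕ) : ℕ :=
  Nat.card {H : Multiset (Finset ℕ) // IsNormalized H ∧ sysWeight H = n}

/-- `hp n` = `hₙ'`, the number of simple (no repeated edges) normalized set systems
of weight `n`. -/
noncomputable def hp (n : ℕ) : ℕ :=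
  Nat.card {H : Multiset (Finset ℕ) // IsNormalized H ∧ sysWeight H = n ∧ H.Nodup}

/-- The `n`-th Bell number: the number of partitions (equivalence relations)
of an `n`-element set. -/
noncomputable def bell (n : ℕ) : ℕ := Nat.card (Setoid (Fin n))

/-- For every `n ∈ ℕ = {1,2,…}`, `hₙ' ≤ hₙ'' ≤ 2·hₙ'`. -/
theorem hp_le_hpp_le_two_hp (n : ℕ) (hn : 1 ≤ n) :
    hp n ≤ hpp n ∧ hpp n ≤ 2 * hp n := by
  classical
  have i1 := Klazar.finite1 n
  have i2 := Klazar.finite2 n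
  have i3 := Klazar.finite3 n
  have i4 := Klazar.finite4 n
  constructor
  · exact Nat.card_le_card_of_injective
      (fun x => (⟨x.1, x.2.1, x.2.2.1⟩ :
        {H : Multiset (Finset ℕ) // IsNormalized H ∧ sysWeight H = n}))
      (by intro a b hab; have h := congrArg Subtype.val hab; exact Subtype.ext h)
  · have hsplit : hpp n = hp n + Nat.card {H : Multiset (Finset ℕ) //
        (IsNormalized H ∧ sysWeight H = n) ∧ ¬ H.Nodup} := by
      rw [hpp, hp]
      have e1 : {H : Multiset (Finset ℕ) // IsNormalized H ∧ sysWeight H = n} ≃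
          {H : Multiset (Finset ℕ) // (IsNormalized H ∧ sysWeight H = n) ∧ H.Nodup} ⊕
          {H : Multiset (Finset ℕ) // (IsNormalized H ∧ sysWeight H = n) ∧ ¬ H.Nodup} :=
        (Equiv.sumCompl
          (fun (x : {H : Multiset (Finset ℕ) // IsNormalized H ∧ sysWeight H = n}) =>
            x.1.Nodup)).symm.trans
          (Equiv.sumCongr
            (Equiv.subtypeSubtypeEquivSubtypeInter _ _)
            (Equiv.subtypeSubtypeEquivSubtypeInter
              (fun H => IsNormalized H ∧ sysWeight H = n) (fun H => ¬ H.Nodup)))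
      rw [Nat.card_congr e1, Nat.card_sum]
      congr 1
      exact Nat.card_congr (Equiv.subtypeEquivRight (fun H => by tauto))
    rw [hsplit]
    have hNS : Nat.card {H : Multiset (Finset ℕ) //
        (IsNormalized H ∧ sysWeight H = n) ∧ ¬ H.Nodup} ≤ hp n := by
      rw [hp]
      apply Nat.card_le_card_of_injective
        (fun x => (⟨Classical.choose (Klazar.main_exists x.1 x.2.1.1 x.2.1.2 x.2.2),
          (Classical.choose_spec (Klazar.main_exists x.1 x.2.1.1 x.2.1.2 x.2.2)).1⟩ :
          {H : Multiset (Finset ℕ) // IsNormalized H ∧ sysWeight H = n ∧ H.Nodup}))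
      intro a b hab
      have ha := (Classical.choose_spec (Klazar.main_exists a.1 a.2.1.1 a.2.1.2 a.2.2)).2
      have hb := (Classical.choose_spec (Klazar.main_exists b.1 b.2.1.1 b.2.1.2 b.2.2)).2
      apply Subtype.ext
      rw [← ha, ← hb]
      exact congrArg (fun y => Klazar.decode y) (congrArg Subtype.val hab)
    omega
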